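/- Let K be a field and let E_1, E_2, ρ_0, ρ_1 ∈ K. Set A := K[X]/(X² − E_1 X + E_2), let x denote the image of X in A (so A is a free K-module with basis {1, x}), and let ε : A → K be the K-linear map with ε(1) = ρ_0 and ε(x) = ρ_1. Set ρ := −(E_2 ρ_0² − E_1 ρ_0 ρ_1 + ρ_1²) and 𝒟 := E_1² − 4E_2, and assume ρ ≠ 0. Define w := ρ^{−1}·((E_1 ρ_1 − 2E_2 ρ_0)·1 + (E_1 ρ_0 − 2ρ_1)·x) ∈ A. Then in the formal power series ring K[[T]] the identity (ρ − ρ_0 𝒟 T + 𝒟 T²) · ∑_{n≥0} ε(wⁿ) Tⁿ = ρ_0 ρ + (2ρ − ρ_0² 𝒟) T holds; equivalently, the generating function of the closed-surface evaluations ε(wⁿ) of the deformed rank-two Frobenius algebra A is the rational function (ρ_0 ρ + (2ρ − ρ_0² 𝒟)T)/(ρ − ρ_0 𝒟 T + 𝒟 T²). -/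

import Mathlib

/-- The rank-two algebra `A = K[X]/(X² − E₁X + E₂)`. -/
abbrev RankTwoAlg (K : Type*) [Field K] (E₁ E₂ : K) : Type _ :=
  Polynomial K ⧸
    Ideal.span {(Polynomial.X ^ 2 - Polynomial.C E₁ * Polynomial.X + Polynomial.C E₂ :
      Polynomial K)}

/-- The image `x` of `X` in `A = K[X]/(X² − E₁X + E₂)`. -/
noncomputable def rankTwoGen (K : Type*) [Field K] (E₁ E₂ : K) : RankTwoAlg K E₁ E₂ :=
  Ideal.Quotient.mk
    (Ideal.span {(Polynomial.X ^ 2 - Polynomial.C E₁ * Polynomial.X + Polynomial.C E₂ :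
      Polynomial K)}) Polynomial.X

set_option maxHeartbeats 1000000

lemma aux_coeff_succ {R : Type*} [Semiring R] (n : ℕ) (f : PowerSeries R) :
    PowerSeries.coeff (n + 2) (PowerSeries.X * f) = PowerSeries.coeff (n + 1) f :=
  PowerSeries.coeff_succ_X_mul (n + 1) f

lemma aux_coeff_one {R : Type*} [Semiring R] (f : PowerSeries R) :
    PowerSeries.coeff 1 (PowerSeries.X * f) = PowerSeries.coeff 0 f :=
  PowerSeries.coeff_succ_X_mul 0 f

lemma aux_coeff_sq {R : Type*} [Semiring R] (n : ℕ) (f : PowerSeries R) :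
    PowerSeries.coeff (n + 2) (PowerSeries.X ^ 2 * f) = PowerSeries.coeff n f := by
  rw [pow_two, mul_assoc, aux_coeff_succ, PowerSeries.coeff_succ_X_mul]

lemma aux_coeff_sq_one {R : Type*} [Semiring R] (f : PowerSeries R) :
    PowerSeries.coeff 1 (PowerSeries.X ^ 2 * f) = 0 := by
  rw [pow_two, mul_assoc, aux_coeff_one, PowerSeries.coeff_zero_X_mul]

lemma aux_sq {K A : Type*} [Field K] [Ring A] [Algebra K A]
    (E₁ E₂ ρ₀ ρ₁ ρ 𝒟 : K)
    (hρdef : ρ = -(E₂ * ρ₀ ^ 2 - E₁ * ρ₀ * ρ₁ + ρ₁ ^ 2))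
    (h𝒟 : 𝒟 = E₁ ^ 2 - 4 * E₂)
    (x : A) (hx : x * x = E₁ • x - E₂ • (1 : A)) :
    ((E₁ * ρ₁ - 2 * E₂ * ρ₀) • (1 : A) + (E₁ * ρ₀ - 2 * ρ₁) • x) *
      ((E₁ * ρ₁ - 2 * E₂ * ρ₀) • (1 : A) + (E₁ * ρ₀ - 2 * ρ₁) • x) =
    (ρ₀ * 𝒟) • ((E₁ * ρ₁ - 2 * E₂ * ρ₀) • (1 : A) + (E₁ * ρ₀ - 2 * ρ₁) • x) -
      (ρ * 𝒟) • (1 : A) := by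
  simp only [mul_add, add_mul, smul_mul_smul_comm, one_mul, mul_one, hx]
  match_scalars
  · rw [hρdef, h𝒟]; ring
  · rw [h𝒟]; ring

/-- Let `K` be a field, `A = K[X]/(X² − E₁X + E₂)` with generator `x`, and let
`ε : A → K` be the `K`-linear trace with `ε(1) = ρ₀` and `ε(x) = ρ₁`.  Set
`ρ = −(E₂ρ₀² − E₁ρ₀ρ₁ + ρ₁²)`, `𝒟 = E₁² − 4E₂`, assume `ρ ≠ 0`, and let
`w = ρ⁻¹·((E₁ρ₁ − 2E₂ρ₀)·1 + (E₁ρ₀ − 2ρ₁)·x)` be the handle element.  Then in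
`K[[T]]`:
`(ρ − ρ₀𝒟T + 𝒟T²) · ∑ₙ ε(wⁿ)Tⁿ = ρ₀ρ + (2ρ − ρ₀²𝒟)T`. -/
theorem rank_two_frobenius_generating_function
    (K : Type*) [Field K] (E₁ E₂ ρ₀ ρ₁ : K)
    (ρ : K) (hρdef : ρ = -(E₂ * ρ₀ ^ 2 - E₁ * ρ₀ * ρ₁ + ρ₁ ^ 2)) (hρ : ρ ≠ 0)
    (𝒟 : K) (h𝒟 : 𝒟 = E₁ ^ 2 - 4 * E₂)
    (ε : RankTwoAlg K E₁ E₂ →ₗ[K] K)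
    (hε1 : ε 1 = ρ₀) (hεx : ε (rankTwoGen K E₁ E₂) = ρ₁)
    (w : RankTwoAlg K E₁ E₂)
    (hw : w = ρ⁻¹ • ((E₁ * ρ₁ - 2 * E₂ * ρ₀) • (1 : RankTwoAlg K E₁ E₂) +
      (E₁ * ρ₀ - 2 * ρ₁) • rankTwoGen K E₁ E₂)) :
    (PowerSeries.C (R := K) ρ - PowerSeries.C (R := K) (ρ₀ * 𝒟) * PowerSeries.X +
        PowerSeries.C (R := K) 𝒟 * PowerSeries.X ^ 2) *
      PowerSeries.mk (fun n => ε (w ^ n)) =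
    PowerSeries.C (R := K) (ρ₀ * ρ) + PowerSeries.C (R := K) (2 * ρ - ρ₀ ^ 2 * 𝒟) * PowerSeries.X := by
  set x := rankTwoGen K E₁ E₂ with hxdef
  set u : RankTwoAlg K E₁ E₂ :=
    (E₁ * ρ₁ - 2 * E₂ * ρ₀) • (1 : RankTwoAlg K E₁ E₂) + (E₁ * ρ₀ - 2 * ρ₁) • x with hu
  -- the quadratic relation in A
  have hrel : x * x = E₁ • x - E₂ • (1 : RankTwoAlg K E₁ E₂) := by
    have h0 : (Ideal.Quotient.mk
        (Ideal.span {(Polynomial.X ^ 2 - Polynomial.C E₁ * Polynomial.X + Polynomial.C E₂ :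
          Polynomial K)})
        (Polynomial.X ^ 2 - Polynomial.C E₁ * Polynomial.X + Polynomial.C E₂)) = 0 :=
      Ideal.Quotient.eq_zero_iff_mem.mpr (Ideal.subset_span rfl)
    have halg : ∀ a : K, (Ideal.Quotient.mk
        (Ideal.span {(Polynomial.X ^ 2 - Polynomial.C E₁ * Polynomial.X + Polynomial.C E₂ :
          Polynomial K)}) (Polynomial.C a)) = a • (1 : RankTwoAlg K E₁ E₂) := by
      intro a
      rw [show (Polynomial.C a : Polynomial K) = algebraMap K (Polynomial K) a from rfl,
        ← Ideal.Quotient.mkₐ_eq_mk K, AlgHom.commutes, Algebra.algebraMap_eq_smul_one]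
    have hxX : (Ideal.Quotient.mk
        (Ideal.span {(Polynomial.X ^ 2 - Polynomial.C E₁ * Polynomial.X + Polynomial.C E₂ :
          Polynomial K)}) Polynomial.X) = x := rfl
    rw [map_add, map_sub, map_pow, map_mul, halg, halg, hxX, smul_mul_assoc, one_mul] at h0
    have h1 : x * x - E₁ • x + E₂ • (1 : RankTwoAlg K E₁ E₂) = 0 := by
      rw [← pow_two]; exact h0
    linear_combination (norm := module) h1
  -- quadratic relation for w
  have huu : u * u = (ρ₀ * 𝒟) • u - (ρ * 𝒟) • (1 : RankTwoAlg K E₁ E₂) :=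
    aux_sq E₁ E₂ ρ₀ ρ₁ ρ 𝒟 hρdef h𝒟 x hrel
  have hq : ρ • (w * w) = (ρ₀ * 𝒟) • w - 𝒟 • (1 : RankTwoAlg K E₁ E₂) := by
    rw [hw, smul_mul_smul_comm, huu]
    simp only [smul_sub, smul_smul]
    have e1 : ρ * (ρ⁻¹ * ρ⁻¹ * (ρ₀ * 𝒟)) = ρ₀ * 𝒟 * ρ⁻¹ := by field_simp; try ring
    have e2 : ρ * (ρ⁻¹ * ρ⁻¹ * (ρ * 𝒟)) = 𝒟 := by field_simp; try ring
    rw [e1, e2]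
  -- recurrence for ε (w ^ n)
  have hrec : ∀ n : ℕ, ρ * ε (w ^ (n + 2)) = ρ₀ * 𝒟 * ε (w ^ (n + 1)) - 𝒟 * ε (w ^ n) := by
    intro n
    have h : ρ • w ^ (n + 2) = (ρ₀ * 𝒟) • w ^ (n + 1) - 𝒟 • w ^ n := by
      have h2 : w ^ (n + 2) = (w * w) * w ^ n := by ring
      have h1 : w ^ (n + 1) = w * w ^ n := by ring
      rw [h2, h1, ← smul_mul_assoc, hq, sub_mul, smul_mul_assoc, smul_mul_assoc, one_mul]
    have := congrArg ε h
    simpa [map_smul, map_sub, smul_eq_mul] using this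
  -- initial values
  have hε0 : ε (w ^ 0) = ρ₀ := by rw [pow_zero, hε1]
  have hεw : ε w = 2 := by
    rw [hw, map_smul, hu, map_add, map_smul, map_smul, hε1, hεx, smul_eq_mul,
      smul_eq_mul, smul_eq_mul]
    have : (E₁ * ρ₁ - 2 * E₂ * ρ₀) * ρ₀ + (E₁ * ρ₀ - 2 * ρ₁) * ρ₁ = 2 * ρ := by
      rw [hρdef]; ring
    rw [this]; field_simp
  -- power series identity, coefficientwise
  ext n
  rw [add_mul, sub_mul, mul_assoc, mul_assoc]
  match n with
  | 0 =>
    simp [hε0, hε1]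
    try ring
  | 1 =>
    simp only [map_add, map_sub, PowerSeries.coeff_C_mul, aux_coeff_one, aux_coeff_sq_one,
      PowerSeries.coeff_mk, mul_zero]
    simp [hε0, hεw, hε1, PowerSeries.coeff_C]
    ring
  | (n + 2) =>
    simp only [map_add, map_sub, PowerSeries.coeff_C_mul, aux_coeff_succ, aux_coeff_sq,
      PowerSeries.coeff_mk]
    rw [sub_mul, map_sub, PowerSeries.coeff_C_mul, PowerSeries.coeff_C_mul,
      PowerSeries.coeff_C, PowerSeries.coeff_X,
      if_neg (by omega : ¬(n + 2 = 0)), if_neg (by omega : ¬(n + 2 = 1))]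
    linear_combination hrec n
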